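/- arXiv:1210.5607 — 6 statements merged into one kernel-verified Lean document; each statement's English description precedes it below -/
import Mathlib

section
/- Let c be a nonrepetitive coloring of G[E_k], where G is any graph and k ≥ 1. If v ∈ V(G) is a vertex of degree d in G and two distinct vertices in the layer v[E_k] receive the same color under c, then c uses at least dk+1 colors. -/
/-- The lexicographic product `G[H]` of two simple graphs. -/
def lexProd {V W : Type*} (G : SimpleGraph V) (H : SimpleGraph W) : SimpleGraph (V × W) where
  Adj x y := G.Adj x.1 y.1 ∨ (x.1 = y.1 ∧ H.Adj x.2 y.2)
  symm := by
    constructor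
    rintro ⟨a, b⟩ ⟨a', b'⟩ (h | ⟨h1, h2⟩)
    · exact Or.inl h.symm
    · exact Or.inr ⟨h1.symm, h2.symm⟩
  loopless := by
    constructor
    rintro ⟨a, b⟩ (h | ⟨_, h2⟩)
    · exact G.irrefl h
    · exact H.irrefl h2

/-- A coloring `c` of a graph `G` is nonrepetitive if there is no path
`v₁ v₂ … v_{2l}` (pairwise distinct vertices, consecutive ones adjacent) with
`c vᵢ = c v_{l+i}` for all `1 ≤ i ≤ l`. -/
def IsNonrepetitive {V α : Type*} (G : SimpleGraph V) (c : V → α) : Prop :=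
  ∀ l : ℕ, 0 < l → ∀ f : ℕ → V,
    (∀ i j, i < 2 * l → j < 2 * l → f i = f j → i = j) →
    (∀ i, i + 1 < 2 * l → G.Adj (f i) (f (i + 1))) →
    ¬ (∀ i, i < l → c (f i) = c (f (i + l)))

/-- The Thue chromatic number: least number of colors in a nonrepetitive coloring. -/
noncomputable def thueNumber {V : Type*} (G : SimpleGraph V) : ℕ :=
  sInf {n : ℕ | ∃ c : V → Fin n, IsNonrepetitive G c}

/-- The rainbow Thue chromatic number of `G[H]`: least number of colors in a
nonrepetitive coloring of `G[H]` in which every layer is rainbow colored. -/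
noncomputable def rainbowThueNumber {V W : Type*} (G : SimpleGraph V) (H : SimpleGraph W) : ℕ :=
  sInf {n : ℕ | ∃ c : V × W → Fin n, IsNonrepetitive (lexProd G H) c ∧
    ∀ v : V, Function.Injective fun w : W => c (v, w)}

/-- If `c` is a nonrepetitive coloring of `G[E_k]`, `v` has degree `d` in `G`, and two
distinct vertices of the layer `v[E_k]` receive the same color, then `c` uses at least
`d*k + 1` colors. -/
theorem stmt_4 {V α : Type*} (G : SimpleGraph V) (k : ℕ) (hk : 1 ≤ k)
    (c : V × Fin k → α)
    (hnr : IsNonrepetitive (lexProd G (⊥ : SimpleGraph (Fin k))) c)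
    (v : V) (d : ℕ) (hfin : (G.neighborSet v).Finite) (hdeg : (G.neighborSet v).ncard = d)
    (u₁ u₂ : Fin k) (hne : u₁ ≠ u₂) (hcol : c (v, u₁) = c (v, u₂)) :
    ∃ S : Finset α, ↑S ⊆ Set.range c ∧ d * k + 1 ≤ S.card := by
  classical
  have key1 : ∀ w a w' b, G.Adj v w → G.Adj v w' →
      c (w, a) = c (w', b) → ((w : V), (a : Fin k)) = (w', b) := by
    intro w a w' b hw hw' hc
    by_contra hne2
    refine hnr 2 (by norm_num)
      (fun i => if i = 0 then (v, u₁) else if i = 1 then (w, a)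
        else if i = 2 then (v, u₂) else (w', b)) ?_ ?_ ?_
    · intro i j hi hj hfij
      have hi' : i < 4 := by omega
      have hj' : j < 4 := by omega
      interval_cases i <;> interval_cases j <;> norm_num at hfij <;>
        first
        | rfl
        | exact (hne rfl).elim
        | exact (hne hfij).elim
        | exact (hne hfij.symm).elim
        | (exfalso; obtain ⟨h1, h2⟩ := hfij;
           first
           | exact hw.ne h1
           | exact hw.ne h1.symm
           | exact hw'.ne h1
           | exact hw'.ne h1.symm
           | exact hne h2
           | exact hne h2.symm
           | exact hne2 (by rw [h1, h2]))
    · intro i hi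
      have hi' : i < 3 := by omega
      interval_cases i <;> norm_num <;>
        exact Or.inl (by first | exact hw | exact hw.symm | exact hw' | exact hw'.symm)
    · intro i hi
      have hi' : i < 2 := by omega
      interval_cases i <;> norm_num
      · exact hcol
      · exact hc
  have key2 : ∀ w a, G.Adj v w → c (w, a) ≠ c (v, u₁) := by
    intro w a hw hc
    refine hnr 1 (by norm_num)
      (fun i => if i = 0 then (w, a) else (v, u₂)) ?_ ?_ ?_
    · intro i j hi hj hfij
      have hi' : i < 2 := by omega
      have hj' : j < 2 := by omega
      interval_cases i <;> interval_cases j <;> norm_num at hfij <;>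
        first
        | rfl
        | (exfalso; obtain ⟨h1, h2⟩ := hfij;
           first
           | exact hw.ne h1
           | exact hw.ne h1.symm)
    · intro i hi
      have hi' : i = 0 := by omega
      subst hi'
      norm_num
      exact Or.inl hw.symm
    · intro i hi
      have hi' : i = 0 := by omega
      subst hi'
      norm_num
      exact hc.trans hcol
  set N : Finset V := hfin.toFinset with hN
  have hNmem : ∀ w, w ∈ N ↔ G.Adj v w := by
    intro w; simp [hN, Set.Finite.mem_toFinset, SimpleGraph.mem_neighborSet]
  set T : Finset (V × Fin k) := N ×ˢ Finset.univ with hT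
  have hinj : Set.InjOn c T := by
    intro p hp q hq hc
    simp only [hT, Finset.coe_product, Set.mem_prod, Finset.mem_coe] at hp hq
    exact key1 p.1 p.2 q.1 q.2 ((hNmem p.1).1 hp.1) ((hNmem q.1).1 hq.1) (by simpa using hc)
  refine ⟨Finset.image c T ∪ {c (v, u₁)}, ?_, ?_⟩
  · intro x hx
    simp only [Finset.coe_union, Set.mem_union, Finset.coe_image, Set.mem_image,
      Finset.coe_singleton, Set.mem_singleton_iff] at hx
    rcases hx with ⟨p, _, rfl⟩ | rfl
    · exact ⟨p, rfl⟩
    · exact ⟨(v, u₁), rfl⟩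
  · have hdisj : Disjoint (Finset.image c T) {c (v, u₁)} := by
      simp only [Finset.disjoint_singleton_right, Finset.mem_image]
      rintro ⟨p, hp, hc⟩
      simp only [hT, Finset.mem_product] at hp
      exact key2 p.1 p.2 ((hNmem p.1).1 hp.1) hc
    rw [Finset.card_union_of_disjoint hdisj, Finset.card_singleton,
      Finset.card_image_of_injOn hinj, hT, Finset.card_product, Finset.card_univ,
      Fintype.card_fin]
    have : N.card = d := by rw [hN, ← hdeg, Set.ncard_eq_toFinset_card _ hfin]
    rw [this]
end

section
/- Let S be a finite sequence over a 3-letter alphabet that avoids repetitions of length at most 6. Then every gap between two consecutive peaks of S is at most 3, and every such gap is at least 1 except possibly the first gap (between the first position and the next peak) and the last gap (between the last peak before the final position and the final position), which can be 0. -/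
/-- A sequence `s` of length `n` avoids repetitions of length at most 6 if no block of
`2l` consecutive entries with `1 ≤ l ≤ 3` forms a repetition. -/
def AvoidsShortReps (n : ℕ) (s : ℕ → Fin 3) : Prop :=
  ∀ start l : ℕ, 1 ≤ l → l ≤ 3 → start + 2 * l ≤ n →
    ¬ (∀ i, i < l → s (start + i) = s (start + l + i))

/-- A position `p` of a sequence of length `n` is a peak if it is the first or the last
position, or its two neighboring entries are equal. -/
def IsPeak (n : ℕ) (s : ℕ → Fin 3) (p : ℕ) : Prop :=
  p < n ∧ (p = 0 ∨ p = n - 1 ∨ s (p - 1) = s (p + 1))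

/-- `p` and `q` are consecutive peaks (with `p < q` and no peak strictly in between);
the gap between them is `q - p - 1`. -/
def ConsecutivePeaks (n : ℕ) (s : ℕ → Fin 3) (p q : ℕ) : Prop :=
  IsPeak n s p ∧ IsPeak n s q ∧ p < q ∧ ∀ r, p < r → r < q → ¬ IsPeak n s r

lemma fin3_aux : ∀ a0 a1 a2 a3 a4 a5 : Fin 3,
    a0 ≠ a1 → a1 ≠ a2 → a2 ≠ a3 → a3 ≠ a4 → a4 ≠ a5 →
    a0 ≠ a2 → a1 ≠ a3 → a2 ≠ a4 → a3 ≠ a5 →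
    a0 = a3 ∧ a1 = a4 ∧ a2 = a5 := by decide

/-- In a sequence over 3 letters avoiding repetitions of length at most 6, every gap
between consecutive peaks is at most 3, and at least 1 except possibly the first and
the last gap. -/
theorem stmt_8 (n : ℕ) (s : ℕ → Fin 3) (h : AvoidsShortReps n s)
    (p q : ℕ) (hpq : ConsecutivePeaks n s p q) :
    q - p - 1 ≤ 3 ∧ (p ≠ 0 → q ≠ n - 1 → 1 ≤ q - p - 1) := by
  obtain ⟨hp, hq, hlt, hbet⟩ := hpq
  have hqn : q < n := hq.1
  have notpeak : ∀ r, p < r → r < q → s (r - 1) ≠ s (r + 1) := by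
    intro r h1 h2
    have hnp := hbet r h1 h2
    rw [IsPeak] at hnp; push_neg at hnp
    exact (hnp (by omega)).2.2
  have hadj : ∀ k, p + k + 2 ≤ n → s (p + k) ≠ s (p + k + 1) := by
    intro k hk heq
    exact h (p + k) 1 le_rfl (by norm_num) (by omega) (fun i hi => by
      interval_cases i; simpa using heq)
  constructor
  · by_contra hgap
    push_neg at hgap
    have hq5 : p + 5 ≤ q := by omega
    have h01 := hadj 0 (by omega)
    have h12 := hadj 1 (by omega)
    have h23 := hadj 2 (by omega)
    have h34 := hadj 3 (by omega)
    have h45 := hadj 4 (by omega)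
    have h02 : s p ≠ s (p + 2) := by
      have := notpeak (p + 1) (by omega) (by omega)
      simpa using this
    have h13 : s (p + 1) ≠ s (p + 3) := by
      have := notpeak (p + 2) (by omega) (by omega)
      have e : p + 2 - 1 = p + 1 := by omega
      rwa [e] at this
    have h24 : s (p + 2) ≠ s (p + 4) := by
      have := notpeak (p + 3) (by omega) (by omega)
      have e : p + 3 - 1 = p + 2 := by omega
      rwa [e] at this
    have h35 : s (p + 3) ≠ s (p + 5) := by
      have := notpeak (p + 4) (by omega) (by omega)
      have e : p + 4 - 1 = p + 3 := by omega
      rwa [e] at this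
    obtain ⟨e0, e1, e2⟩ := fin3_aux (s p) (s (p+1)) (s (p+2)) (s (p+3)) (s (p+4)) (s (p+5))
      (by simpa using h01) h12 h23 h34 h45 h02 h13 h24 h35
    refine h p 3 (by norm_num) le_rfl (by omega) (fun i hi => ?_)
    interval_cases i
    · simpa using e0
    · have e : p + 3 + 1 = p + 4 := by omega
      rw [e]; exact e1
    · have e : p + 3 + 2 = p + 5 := by omega
      rw [e]; exact e2
  · intro hp0 hqn1
    by_contra hgap
    have hq1 : q = p + 1 := by omega
    have hpn1 : p ≠ n - 1 := by omega
    have sA : s (p - 1) = s (p + 1) := by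
      rcases hp.2 with h' | h' | h' <;> first | exact absurd h' hp0 | exact absurd h' hpn1 | exact h'
    have sB : s p = s (p + 2) := by
      rcases hq.2 with h' | h' | h' <;> [omega; exact absurd h' hqn1; skip]
      rw [hq1] at h'
      simpa using h'
    refine h (p - 1) 2 (by norm_num) (by norm_num) (by omega) (fun i hi => ?_)
    interval_cases i
    · have e1 : p - 1 + 0 = p - 1 := by omega
      have e2 : p - 1 + 2 + 0 = p + 1 := by omega
      rw [e1, e2]; exact sA
    · have e1 : p - 1 + 1 = p := by omega
      have e2 : p - 1 + 2 + 1 = p + 2 := by omega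
      rw [e1, e2]; exact sB
end

section
/- Let S be a finite sequence over a 3-letter alphabet that avoids repetitions of length at most 6, and let p be a peak of S that has a preceding peak at gap g_1 and a succeeding peak at gap g_2 with g_1 ≤ g_2 (or symmetrically with the roles of the two sides exchanged, taking g_1 to be the smaller gap). Then p is the center of a palindrome of length 2g_1 + 3, i.e., x_{p-i} = x_{p+i} for all 1 ≤ i ≤ g_1 + 1. -/
lemma third_letter (a b c d : Fin 3) (h1 : a ≠ b) (h2 : a ≠ c) (h3 : d ≠ b)
    (h4 : d ≠ c) (h5 : b ≠ c) : a = d := by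
  revert a b c d; decide

lemma adj_ne (n : ℕ) (s : ℕ → Fin 3) (h : AvoidsShortReps n s) (r : ℕ)
    (hr : r + 2 ≤ n) : s r ≠ s (r + 1) := by
  intro he
  refine h r 1 le_rfl (by norm_num) (by omega) (fun i hi => ?_)
  have : i = 0 := by omega
  subst this
  simpa using he

lemma nonpeak_ne (n : ℕ) (s : ℕ → Fin 3) (r : ℕ) (hnp : ¬ IsPeak n s r)
    (hr : r < n) : s (r - 1) ≠ s (r + 1) := fun he =>
  hnp ⟨hr, Or.inr (Or.inr he)⟩

/-- If `p` is a peak with preceding peak `p₀` and succeeding peak `p₁`, and `g` is the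
smaller of the two gaps, then `p` is the center of a palindrome of length `2g + 3`,
i.e. `s (p - i) = s (p + i)` for all `1 ≤ i ≤ g + 1`. -/
theorem stmt_9 (n : ℕ) (s : ℕ → Fin 3) (h : AvoidsShortReps n s)
    (p₀ p p₁ : ℕ) (h₀ : ConsecutivePeaks n s p₀ p) (h₁ : ConsecutivePeaks n s p p₁) :
    ∀ i, 1 ≤ i → i ≤ min (p - p₀ - 1) (p₁ - p - 1) + 1 → s (p - i) = s (p + i) := by
  set g := min (p - p₀ - 1) (p₁ - p - 1) with hg
  obtain ⟨hpk₀, hpkp, hlt₀, hnbet₀⟩ := h₀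
  obtain ⟨_, hpk₁, hlt₁, hnbet₁⟩ := h₁
  have hpn : p₁ < n := hpk₁.1
  have hgl : g + 1 ≤ p - p₀ := by omega
  have hgr : g + 1 ≤ p₁ - p := by omega
  -- main claim for all i ≤ g + 1
  have main : ∀ i, i ≤ g + 1 → s (p - i) = s (p + i) := by
    intro i
    induction i using Nat.twoStepInduction with
    | zero => intro _; rfl
    | one =>
      intro _
      rcases hpkp.2 with h' | h' | h'
      · omega
      · omega
      · exact h'
    | more i ih ih1 =>
      intro hi2
      have hi : i ≤ g + 1 := by omega
      have hi1 : i + 1 ≤ g + 1 := by omega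
      have e1 := ih hi
      have e2 := ih1 hi1
      -- p ≥ i + 2
      have hp2 : i + 2 ≤ p := by omega
      obtain ⟨j, rfl⟩ : ∃ j, p = j + (i + 2) := ⟨p - (i + 2), by omega⟩
      have r1 : j + (i + 2) - (i + 1) = j + 1 := by omega
      have r2 : j + (i + 2) - i = j + 2 := by omega
      have r3 : j + (i + 2) - (i + 2) = j := by omega
      rw [r1] at e2
      rw [r2] at e1
      rw [r3]
      -- left non-peak at j+1
      have hnpl : ¬ IsPeak n s (j + 1) := hnbet₀ (j + 1) (by omega) (by omega)
      have hnel : s j ≠ s (j + 2) := by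
        have := nonpeak_ne n s (j + 1) hnpl (by omega)
        simpa using this
      -- right non-peak at p + (i+1)
      have hnpr : ¬ IsPeak n s (j + (i + 2) + (i + 1)) :=
        hnbet₁ _ (by omega) (by omega)
      have hner : s (j + (i + 2) + i) ≠ s (j + (i + 2) + (i + 2)) := by
        have := nonpeak_ne n s (j + (i + 2) + (i + 1)) hnpr (by omega)
        have eL : j + (i + 2) + (i + 1) - 1 = j + (i + 2) + i := by omega
        have eR : j + (i + 2) + (i + 1) + 1 = j + (i + 2) + (i + 2) := by omega
        rwa [eL, eR] at this
      -- adjacent distinctness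
      have hadjl : s j ≠ s (j + 1) := adj_ne n s h j (by omega)
      have hadjl2 : s (j + 1) ≠ s (j + 2) := adj_ne n s h (j + 1) (by omega)
      have hadjr : s (j + (i + 2) + (i + 1)) ≠ s (j + (i + 2) + (i + 2)) := by
        have := adj_ne n s h (j + (i + 2) + (i + 1)) (by omega)
        have eR : j + (i + 2) + (i + 1) + 1 = j + (i + 2) + (i + 2) := by omega
        rwa [eR] at this
      have h3 : s (j + (i + 2) + (i + 2)) ≠ s (j + 1) := by rw [e2]; exact hadjr.symm
      have h4 : s (j + (i + 2) + (i + 2)) ≠ s (j + 2) := by rw [e1]; exact hner.symm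
      exact third_letter (s j) (s (j + 1)) (s (j + 2)) (s (j + (i + 2) + (i + 2)))
        hadjl hnel h3 h4 hadjl2
  intro i _ hi
  exact main i hi
end

section
/- Let S be a finite sequence over a 3-letter alphabet that avoids repetitions of length at most 6. If S has three consecutive gaps g_1, g_2, g_3 (between four consecutive peaks) with g_1 ≥ g_2 and g_2 ≤ g_3, then S contains a block of consecutive entries that is equivalent (up to a permutation of the three letters) to one of the sequences CBABCBA, ACBABCACBA, or BACBABCABACBA. -/
/-- `s` (of length `n`) contains a block of consecutive entries equal, up to a
permutation of the three letters, to the given pattern. -/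
def MatchesPattern (n : ℕ) (s : ℕ → Fin 3) (pat : List (Fin 3)) : Prop :=
  ∃ start : ℕ, ∃ σ : Equiv.Perm (Fin 3), start + pat.length ≤ n ∧
    ∀ i, (hi : i < pat.length) → s (start + i) = σ (pat.get ⟨i, hi⟩)

/-- With `A = 0`, `B = 1`, `C = 2`: the pattern `CBABCBA`. -/
def pat1 : List (Fin 3) := [2, 1, 0, 1, 2, 1, 0]

/-- With `A = 0`, `B = 1`, `C = 2`: the pattern `ACBABCACBA`. -/
def pat2 : List (Fin 3) := [0, 2, 1, 0, 1, 2, 0, 2, 1, 0]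

/-- With `A = 0`, `B = 1`, `C = 2`: the pattern `BACBABCABACBA`. -/
def pat3 : List (Fin 3) := [1, 0, 2, 1, 0, 1, 2, 0, 1, 0, 2, 1, 0]

lemma third3 {x y z w : Fin 3} (hxy : x ≠ y) (hzx : z ≠ x) (hzy : z ≠ y)
    (hwx : w ≠ x) (hwy : w ≠ y) : z = w := by
  have : ∀ x y z w : Fin 3, x ≠ y → z ≠ x → z ≠ y → w ≠ x → w ≠ y → z = w := by decide
  exact this x y z w hxy hzx hzy hwx hwy

lemma exists_perm3 : ∀ a b : Fin 3, a ≠ b →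
    ∃ σ : Equiv.Perm (Fin 3), σ 0 = a ∧ σ 1 = b ∧ σ 2 ≠ a ∧ σ 2 ≠ b := by decide


/-- If a sequence over 3 letters avoiding repetitions of length at most 6 has three
consecutive gaps `g₁ ≥ g₂ ≤ g₃` (between four consecutive peaks), then it contains a
block equivalent to `CBABCBA`, `ACBABCACBA` or `BACBABCABACBA`. -/
theorem stmt_10 (n : ℕ) (s : ℕ → Fin 3) (h : AvoidsShortReps n s)
    (p₀ p₁ p₂ p₃ : ℕ)
    (h01 : ConsecutivePeaks n s p₀ p₁) (h12 : ConsecutivePeaks n s p₁ p₂)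
    (h23 : ConsecutivePeaks n s p₂ p₃)
    (hg1 : p₂ - p₁ - 1 ≤ p₁ - p₀ - 1) (hg3 : p₂ - p₁ - 1 ≤ p₃ - p₂ - 1) :
    MatchesPattern n s pat1 ∨ MatchesPattern n s pat2 ∨ MatchesPattern n s pat3 := by
  obtain ⟨hP0, hP1, hlt01, hB01⟩ := h01
  obtain ⟨-, hP2, hlt12, hB12⟩ := h12
  obtain ⟨-, hP3, hlt23, hB23⟩ := h23
  have hn : p₃ < n := hP3.1
  -- adjacent letters differ
  have hadj : ∀ x y : ℕ, x + 2 ≤ n → x + 1 = y → s x ≠ s y := by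
    intro x y hx hxy heq
    refine h x 1 le_rfl (by norm_num) (by omega) ?_
    intro j hj
    obtain rfl : j = 0 := by omega
    rw [← hxy] at heq
    simpa using heq
  -- non-peak positions: neighbours differ
  have hnp : ∀ r x y : ℕ,
      (p₀ < r ∧ r < p₁ ∨ p₁ < r ∧ r < p₂ ∨ p₂ < r ∧ r < p₃) →
      x + 1 = r → r + 1 = y → s x ≠ s y := by
    intro r x y hr hx hy heq
    have hnpk : ¬ IsPeak n s r := by
      rcases hr with ⟨h1, h2⟩ | ⟨h1, h2⟩ | ⟨h1, h2⟩
      · exact hB01 r h1 h2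
      · exact hB12 r h1 h2
      · exact hB23 r h1 h2
    apply hnpk
    refine ⟨by omega, Or.inr (Or.inr ?_)⟩
    have hx' : r - 1 = x := by omega
    rw [hx', hy]; exact heq
  -- interior peaks: equal neighbours
  have hpeak : ∀ p x y : ℕ, (p = p₁ ∨ p = p₂) → x + 1 = p → p + 1 = y → s x = s y := by
    intro p x y hp hx hy
    have hpk : IsPeak n s p := by rcases hp with rfl | rfl; exacts [hP1, hP2]
    rcases hp with rfl | rfl <;>
    · rcases hpk.2 with h0 | hlast | heq
      · exact absurd h0 (by omega)
      · exact absurd hlast (by omega)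
      · have hx' : x = p - 1 := by omega
        · rw [hx', ← hy]; exact heq
  -- lower bound for the middle gap
  have hk_lb : 2 ≤ p₂ - p₁ := by
    by_contra hcon
    have he : p₂ = p₁ + 1 := by omega
    refine h (p₁ - 1) 2 (by norm_num) (by norm_num) (by omega) ?_
    intro j hj
    interval_cases j
    · have e1 : p₁ - 1 + 0 = p₁ - 1 := by omega
      have e2 : p₁ - 1 + 2 + 0 = p₁ + 1 := by omega
      rw [e1, e2]
      exact hpeak p₁ (p₁ - 1) (p₁ + 1) (Or.inl rfl) (by omega) rfl
    · have e1 : p₁ - 1 + 1 = p₁ := by omega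
      have e2 : p₁ - 1 + 2 + 1 = p₁ + 2 := by omega
      rw [e1, e2]
      exact hpeak p₂ p₁ (p₁ + 2) (Or.inr rfl) (by omega) (by omega)
  -- upper bound for the middle gap
  have hk_ub : p₂ - p₁ ≤ 4 := by
    by_contra hcon
    have h5 : p₁ + 5 ≤ p₂ := by omega
    have e3 : s (p₁ + 3) = s p₁ :=
      third3 (x := s (p₁ + 1)) (y := s (p₁ + 2))
        (hadj (p₁ + 1) (p₁ + 2) (by omega) (by omega))
        ((hnp (p₁ + 2) (p₁ + 1) (p₁ + 3) (Or.inr (Or.inl ⟨by omega, by omega⟩)) (by omega) (by omega)).symm)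
        ((hadj (p₁ + 2) (p₁ + 3) (by omega) (by omega)).symm)
        (hadj p₁ (p₁ + 1) (by omega) (by omega))
        (hnp (p₁ + 1) p₁ (p₁ + 2) (Or.inr (Or.inl ⟨by omega, by omega⟩)) (by omega) (by omega))
    have e4 : s (p₁ + 4) = s (p₁ + 1) :=
      third3 (x := s (p₁ + 2)) (y := s (p₁ + 3))
        (hadj (p₁ + 2) (p₁ + 3) (by omega) (by omega))
        ((hnp (p₁ + 3) (p₁ + 2) (p₁ + 4) (Or.inr (Or.inl ⟨by omega, by omega⟩)) (by omega) (by omega)).symm)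
        ((hadj (p₁ + 3) (p₁ + 4) (by omega) (by omega)).symm)
        (hadj (p₁ + 1) (p₁ + 2) (by omega) (by omega))
        (hnp (p₁ + 2) (p₁ + 1) (p₁ + 3) (Or.inr (Or.inl ⟨by omega, by omega⟩)) (by omega) (by omega))
    have e5 : s (p₁ + 5) = s (p₁ + 2) :=
      third3 (x := s (p₁ + 3)) (y := s (p₁ + 4))
        (hadj (p₁ + 3) (p₁ + 4) (by omega) (by omega))
        ((hnp (p₁ + 4) (p₁ + 3) (p₁ + 5) (Or.inr (Or.inl ⟨by omega, by omega⟩)) (by omega) (by omega)).symm)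
        ((hadj (p₁ + 4) (p₁ + 5) (by omega) (by omega)).symm)
        (hadj (p₁ + 2) (p₁ + 3) (by omega) (by omega))
        (hnp (p₁ + 3) (p₁ + 2) (p₁ + 4) (Or.inr (Or.inl ⟨by omega, by omega⟩)) (by omega) (by omega))
    refine h p₁ 3 (by norm_num) le_rfl (by omega) ?_
    intro j hj
    interval_cases j
    · exact e3.symm
    · have e : p₁ + 3 + 1 = p₁ + 4 := by omega
      rw [e]; exact e4.symm
    · have e : p₁ + 3 + 2 = p₁ + 5 := by omega
      rw [e]; exact e5.symm
  have hk1 : p₂ - p₁ ≤ p₁ - p₀ := by omega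
  have hk3 : p₂ - p₁ ≤ p₃ - p₂ := by omega
  have hcases : p₂ - p₁ = 2 ∨ p₂ - p₁ = 3 ∨ p₂ - p₁ = 4 := by omega
  rcases hcases with hk | hk | hk
  · -- k = 2 : pattern pat1
    obtain ⟨q, rfl⟩ : ∃ q, p₁ = q + 2 := ⟨p₁ - 2, by omega⟩
    have hp2e : p₂ = q + 4 := by omega
    have hq0 : p₀ ≤ q := by omega
    have hq3 : q + 6 ≤ p₃ := by omega
    have hqn : q + 7 ≤ n := by omega
    have hab : s (q + 2) ≠ s (q + 3) := hadj (q + 2) (q + 3) (by omega) (by omega)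
    obtain ⟨σ, hσ0, hσ1, hca, hcb⟩ := exists_perm3 _ _ hab
    have hpL : s (q + 1) = s (q + 3) :=
      hpeak (q + 2) (q + 1) (q + 3) (Or.inl rfl) (by omega) (by omega)
    have hpR : s (q + 3) = s (q + 5) :=
      hpeak (q + 4) (q + 3) (q + 5) (Or.inr hp2e.symm) (by omega) (by omega)
    have h4 : s (q + 4) = σ 2 :=
      third3 (x := s (q + 2)) (y := s (q + 3)) hab
        ((hnp (q + 3) (q + 2) (q + 4) (Or.inr (Or.inl ⟨by omega, by omega⟩)) (by omega) (by omega)).symm)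
        ((hadj (q + 3) (q + 4) (by omega) (by omega)).symm) hca hcb
    have h1 : s (q + 1) = σ 1 := by rw [hσ1]; exact hpL
    have h0 : s q = σ 2 :=
      third3 (x := s (q + 2)) (y := s (q + 3)) hab
        (hnp (q + 1) q (q + 2) (Or.inl ⟨by omega, by omega⟩) (by omega) (by omega))
        (by rw [← hpL]; exact hadj q (q + 1) (by omega) (by omega))
        hca hcb
    have h5 : s (q + 5) = σ 1 := by rw [hσ1]; exact hpR.symm
    have h6 : s (q + 6) = σ 0 := by
      rw [hσ0]
      refine third3 (x := s (q + 3)) (y := σ 2) hcb.symm ?_ ?_ hab hca.symm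
      · rw [hpR]; exact (hadj (q + 5) (q + 6) (by omega) (by omega)).symm
      · rw [← h4]
        exact (hnp (q + 5) (q + 4) (q + 6) (Or.inr (Or.inr ⟨by omega, by omega⟩)) (by omega) (by omega)).symm
    refine Or.inl ⟨q, σ, ?_, ?_⟩
    · rw [show pat1.length = 7 from rfl]; omega
    · intro i hi
      have hi7 : i < 7 := (show pat1.length = 7 from rfl) ▸ hi
      interval_cases i
      · exact h0
      · exact h1
      · exact hσ0.symm
      · exact hσ1.symm
      · exact h4
      · exact h5
      · exact h6
  · -- k = 3 : pattern pat2
    obtain ⟨q, rfl⟩ : ∃ q, p₁ = q + 3 := ⟨p₁ - 3, by omega⟩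
    have hp2e : p₂ = q + 6 := by omega
    have hq0 : p₀ ≤ q := by omega
    have hq3 : q + 9 ≤ p₃ := by omega
    have hqn : q + 10 ≤ n := by omega
    have hab : s (q + 3) ≠ s (q + 4) := hadj (q + 3) (q + 4) (by omega) (by omega)
    obtain ⟨σ, hσ0, hσ1, hca, hcb⟩ := exists_perm3 _ _ hab
    have hpL : s (q + 2) = s (q + 4) :=
      hpeak (q + 3) (q + 2) (q + 4) (Or.inl rfl) (by omega) (by omega)
    have hpR : s (q + 5) = s (q + 7) :=
      hpeak (q + 6) (q + 5) (q + 7) (Or.inr hp2e.symm) (by omega) (by omega)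
    have h5 : s (q + 5) = σ 2 :=
      third3 (x := s (q + 3)) (y := s (q + 4)) hab
        ((hnp (q + 4) (q + 3) (q + 5) (Or.inr (Or.inl ⟨by omega, by omega⟩)) (by omega) (by omega)).symm)
        ((hadj (q + 4) (q + 5) (by omega) (by omega)).symm) hca hcb
    have h6 : s (q + 6) = σ 0 := by
      rw [hσ0]
      refine third3 (x := s (q + 4)) (y := σ 2) hcb.symm ?_ ?_ hab ?_
      · exact (hnp (q + 5) (q + 4) (q + 6) (Or.inr (Or.inl ⟨by omega, by omega⟩)) (by omega) (by omega)).symm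
      · rw [← h5]; exact (hadj (q + 5) (q + 6) (by omega) (by omega)).symm
      · exact hca.symm
    have h2 : s (q + 2) = σ 1 := by rw [hσ1]; exact hpL
    have h1 : s (q + 1) = σ 2 :=
      third3 (x := s (q + 3)) (y := s (q + 4)) hab
        (hnp (q + 2) (q + 1) (q + 3) (Or.inl ⟨by omega, by omega⟩) (by omega) (by omega))
        (by rw [← hpL]; exact (hadj (q + 1) (q + 2) (by omega) (by omega)))
        hca hcb
    have h0 : s q = σ 0 := by
      rw [hσ0]
      refine third3 (x := s (q + 4)) (y := σ 2) hcb.symm ?_ ?_ hab hca.symm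
      · rw [← hpL]; exact hnp (q + 1) q (q + 2) (Or.inl ⟨by omega, by omega⟩) (by omega) (by omega)
      · rw [← h1]; exact hadj q (q + 1) (by omega) (by omega)
    have h7 : s (q + 7) = σ 2 := hpR.symm.trans h5
    have h8 : s (q + 8) = σ 1 := by
      rw [hσ1]
      refine third3 (x := s (q + 3)) (y := σ 2) hca.symm ?_ ?_ hab.symm hcb.symm
      · rw [← hσ0, ← h6]
        exact (hnp (q + 7) (q + 6) (q + 8) (Or.inr (Or.inr ⟨by omega, by omega⟩)) (by omega) (by omega)).symm
      · rw [← h7]; exact (hadj (q + 7) (q + 8) (by omega) (by omega)).symm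
    have h9 : s (q + 9) = σ 0 := by
      rw [hσ0]
      refine third3 (x := s (q + 4)) (y := σ 2) hcb.symm ?_ ?_ hab hca.symm
      · rw [← hσ1, ← h8]; exact (hadj (q + 8) (q + 9) (by omega) (by omega)).symm
      · rw [← h7]
        exact (hnp (q + 8) (q + 7) (q + 9) (Or.inr (Or.inr ⟨by omega, by omega⟩)) (by omega) (by omega)).symm
    refine Or.inr (Or.inl ⟨q, σ, ?_, ?_⟩)
    · rw [show pat2.length = 10 from rfl]; omega
    · intro i hi
      have hi10 : i < 10 := (show pat2.length = 10 from rfl) ▸ hi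
      interval_cases i
      · exact h0
      · exact h1
      · exact h2
      · exact hσ0.symm
      · exact hσ1.symm
      · exact h5
      · exact h6
      · exact h7
      · exact h8
      · exact h9
  · -- k = 4 : pattern pat3
    obtain ⟨q, rfl⟩ : ∃ q, p₁ = q + 4 := ⟨p₁ - 4, by omega⟩
    have hp2e : p₂ = q + 8 := by omega
    have hq0 : p₀ ≤ q := by omega
    have hq3 : q + 12 ≤ p₃ := by omega
    have hqn : q + 13 ≤ n := by omega
    have hab : s (q + 4) ≠ s (q + 5) := hadj (q + 4) (q + 5) (by omega) (by omega)
    obtain ⟨σ, hσ0, hσ1, hca, hcb⟩ := exists_perm3 _ _ hab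
    have hpL : s (q + 3) = s (q + 5) :=
      hpeak (q + 4) (q + 3) (q + 5) (Or.inl rfl) (by omega) (by omega)
    have hpR : s (q + 7) = s (q + 9) :=
      hpeak (q + 8) (q + 7) (q + 9) (Or.inr hp2e.symm) (by omega) (by omega)
    have h6 : s (q + 6) = σ 2 :=
      third3 (x := s (q + 4)) (y := s (q + 5)) hab
        ((hnp (q + 5) (q + 4) (q + 6) (Or.inr (Or.inl ⟨by omega, by omega⟩)) (by omega) (by omega)).symm)
        ((hadj (q + 5) (q + 6) (by omega) (by omega)).symm) hca hcb
    have h7 : s (q + 7) = σ 0 := by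
      rw [hσ0]
      refine third3 (x := s (q + 5)) (y := σ 2) hcb.symm ?_ ?_ hab hca.symm
      · exact (hnp (q + 6) (q + 5) (q + 7) (Or.inr (Or.inl ⟨by omega, by omega⟩)) (by omega) (by omega)).symm
      · rw [← h6]; exact (hadj (q + 6) (q + 7) (by omega) (by omega)).symm
    have h8 : s (q + 8) = σ 1 := by
      rw [hσ1]
      refine third3 (x := s (q + 4)) (y := σ 2) hca.symm ?_ ?_ hab.symm hcb.symm
      · rw [← hσ0, ← h7]; exact (hadj (q + 7) (q + 8) (by omega) (by omega)).symm
      · rw [← h6]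
        exact (hnp (q + 7) (q + 6) (q + 8) (Or.inr (Or.inl ⟨by omega, by omega⟩)) (by omega) (by omega)).symm
    have h3 : s (q + 3) = σ 1 := by rw [hσ1]; exact hpL
    have h2 : s (q + 2) = σ 2 :=
      third3 (x := s (q + 4)) (y := s (q + 5)) hab
        (hnp (q + 3) (q + 2) (q + 4) (Or.inl ⟨by omega, by omega⟩) (by omega) (by omega))
        (by rw [← hpL]; exact hadj (q + 2) (q + 3) (by omega) (by omega))
        hca hcb
    have h1 : s (q + 1) = σ 0 := by
      rw [hσ0]
      refine third3 (x := s (q + 5)) (y := σ 2) hcb.symm ?_ ?_ hab hca.symm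
      · rw [← hpL]; exact hnp (q + 2) (q + 1) (q + 3) (Or.inl ⟨by omega, by omega⟩) (by omega) (by omega)
      · rw [← h2]; exact hadj (q + 1) (q + 2) (by omega) (by omega)
    have h0 : s q = σ 1 := by
      rw [hσ1]
      refine third3 (x := s (q + 4)) (y := σ 2) hca.symm ?_ ?_ hab.symm hcb.symm
      · rw [← hσ0, ← h1]; exact hadj q (q + 1) (by omega) (by omega)
      · rw [← h2]; exact hnp (q + 1) q (q + 2) (Or.inl ⟨by omega, by omega⟩) (by omega) (by omega)
    have h9 : s (q + 9) = σ 0 := hpR.symm.trans h7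
    have h10 : s (q + 10) = σ 2 :=
      third3 (x := s (q + 4)) (y := s (q + 5)) hab
        (by rw [← hσ0, ← h9]; exact (hadj (q + 9) (q + 10) (by omega) (by omega)).symm)
        (by rw [show s (q+5) = σ 1 from hσ1.symm, ← h8]
            exact (hnp (q + 9) (q + 8) (q + 10) (Or.inr (Or.inr ⟨by omega, by omega⟩)) (by omega) (by omega)).symm)
        hca hcb
    have h11 : s (q + 11) = σ 1 := by
      rw [hσ1]
      refine third3 (x := s (q + 4)) (y := σ 2) hca.symm ?_ ?_ hab.symm hcb.symm
      · rw [show s (q+4) = σ 0 from hσ0.symm, ← h9]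
        exact (hnp (q + 10) (q + 9) (q + 11) (Or.inr (Or.inr ⟨by omega, by omega⟩)) (by omega) (by omega)).symm
      · rw [← h10]; exact (hadj (q + 10) (q + 11) (by omega) (by omega)).symm
    have h12 : s (q + 12) = σ 0 := by
      rw [hσ0]
      refine third3 (x := s (q + 5)) (y := σ 2) hcb.symm ?_ ?_ hab hca.symm
      · rw [show s (q+5) = σ 1 from hσ1.symm, ← h11]
        exact (hadj (q + 11) (q + 12) (by omega) (by omega)).symm
      · rw [← h10]
        exact (hnp (q + 11) (q + 10) (q + 12) (Or.inr (Or.inr ⟨by omega, by omega⟩)) (by omega) (by omega)).symm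
    refine Or.inr (Or.inr ⟨q, σ, ?_, ?_⟩)
    · rw [show pat3.length = 13 from rfl]; omega
    · intro i hi
      have hi13 : i < 13 := (show pat3.length = 13 from rfl) ▸ hi
      interval_cases i
      · exact h0
      · exact h1
      · exact h2
      · exact h3
      · exact hσ0.symm
      · exact hσ1.symm
      · exact h6
      · exact h7
      · exact h8
      · exact h9
      · exact h10
      · exact h11
      · exact h12
end

section
/- Let k ≥ 1 and suppose P_6[K_k] (the lexicographic product of the path on 6 vertices with the complete graph on k vertices) is nonrepetitively colored using at most 3k + ⌊k/2⌋ − 1 colors, and let A, B, C, D, E, F be the color sets of the six layers in path order (each is a k-element set since each layer is a clique). If A, B, C are pairwise disjoint and D, E, F are pairwise disjoint, then either (D is B-rich, E is A-rich, and F is C-rich) or (D is A-rich, E is C-rich, and F is B-rich). -/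
/-- For `k`-element sets of colors `X` and `Y`, `Y` is `X`-rich if
`|X ∩ Y| ≥ ⌈k/2 + 1⌉ = (k+1)/2 + 1`. -/
def IsRich {α : Type*} [DecidableEq α] (k : ℕ) (X Y : Finset α) : Prop :=
  (k + 1) / 2 + 1 ≤ (X ∩ Y).card

/-- The set of colors used by `c` on the layer of the `i`-th vertex. -/
def layerFinset {m k : ℕ} {α : Type*} [DecidableEq α]
    (c : Fin m × Fin k → α) (i : Fin m) : Finset α :=
  Finset.image (fun j : Fin k => c (i, j)) Finset.univ

/- ### Auxiliary machinery -/

lemma nr_proper {V α : Type*} {G : SimpleGraph V} {c : V → α} (hnr : IsNonrepetitive G c)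
    {u v : V} (h : G.Adj u v) : c u ≠ c v := by
  intro hc
  have hne : u ≠ v := h.ne
  exact hnr 1 one_pos (fun n => match n with | 0 => u | _ => v)
    (by intro i j hi hj hf
        norm_num at hi hj
        interval_cases i <;> interval_cases j <;>
          first | rfl | exact absurd hf hne | exact absurd hf.symm hne)
    (by intro i hi
        have hi' : i < 1 := by omega
        interval_cases i
        exact h)
    (by intro i hi
        have hi' : i < 1 := by omega
        interval_cases i
        exact hc)

def wordStar1 : ℕ → Fin 6 := fun n => match n with | 0 => 1 | 1 => 2 | 2 => 3 | _ => 4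
def wordStar2 : ℕ → Fin 6 := fun n => match n with | 0 => 0 | 1 => 1 | 2 => 2 | 3 => 3 | 4 => 4 | _ => 5
def wordStar3 : ℕ → Fin 6 := fun n => match n with | 0 => 1 | 1 => 1 | 2 => 2 | 3 => 3 | 4 => 4 | _ => 5
def wordStar4 : ℕ → Fin 6 := fun n => match n with | 0 => 0 | 1 => 1 | 2 => 2 | 3 => 3 | 4 => 4 | _ => 4
def wordStar8 : ℕ → Fin 6 := fun n =>
  match n with | 0 => 0 | 1 => 0 | 2 => 1 | 3 => 2 | 4 => 3 | 5 => 4 | 6 => 5 | _ => 5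
def wordStar9 : ℕ → Fin 6 := fun n =>
  match n with | 0 => 0 | 1 => 0 | 2 => 1 | 3 => 2 | 4 => 3 | 5 => 4 | 6 => 5 | _ => 4

section Stars

variable {k : ℕ} {α : Type*} {c : Fin 6 × Fin k → α}
  (hnr : IsNonrepetitive (lexProd (SimpleGraph.pathGraph 6) (⊤ : SimpleGraph (Fin k))) c)

include hnr

/-- Layer word 1 2 | 3 4. -/
lemma star1 (b1 q2 b3 q4 : Fin k)
    (e1 : c (1, b1) = c (3, b3)) (e2 : c (2, q2) = c (4, q4)) : False := by
  apply hnr 2 (by norm_num)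
    (fun n => (wordStar1 n, (match n with | 0 => b1 | 1 => q2 | 2 => b3 | _ => q4 : Fin k)))
  · intro i j hi hj hf
    have h1 : wordStar1 i = wordStar1 j := congrArg Prod.fst hf
    norm_num at hi hj
    interval_cases i <;> interval_cases j <;> first | rfl | exact absurd h1 (by decide)
  · intro i hi
    have hi' : i < 3 := by omega
    clear hi
    interval_cases i <;>
      first
      | exact Or.inl (SimpleGraph.pathGraph_adj.mpr (Or.inl rfl))
      | exact Or.inl (SimpleGraph.pathGraph_adj.mpr (Or.inr rfl))
  · intro i hi
    have hi' : i < 2 := by omega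
    clear hi
    interval_cases i
    · exact e1
    · exact e2

/-- Layer word 0 1 2 | 3 4 5. -/
lemma star2 (a0 b1 q2 a3 b4 q5 : Fin k)
    (e1 : c (0, a0) = c (3, a3)) (e2 : c (1, b1) = c (4, b4))
    (e3 : c (2, q2) = c (5, q5)) : False := by
  apply hnr 3 (by norm_num)
    (fun n => (wordStar2 n,
      (match n with | 0 => a0 | 1 => b1 | 2 => q2 | 3 => a3 | 4 => b4 | _ => q5 : Fin k)))
  · intro i j hi hj hf
    have h1 : wordStar2 i = wordStar2 j := congrArg Prod.fst hf
    norm_num at hi hj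
    interval_cases i <;> interval_cases j <;> first | rfl | exact absurd h1 (by decide)
  · intro i hi
    have hi' : i < 5 := by omega
    clear hi
    interval_cases i <;>
      first
      | exact Or.inl (SimpleGraph.pathGraph_adj.mpr (Or.inl rfl))
      | exact Or.inl (SimpleGraph.pathGraph_adj.mpr (Or.inr rfl))
  · intro i hi
    have hi' : i < 3 := by omega
    clear hi
    interval_cases i
    · exact e1
    · exact e2
    · exact e3

/-- Layer word 1 1 2 | 3 4 5. -/
lemma star3 (b1 b1' q2 b3 b4 q5 : Fin k) (hbb : b1 ≠ b1')
    (e1 : c (1, b1) = c (3, b3)) (e2 : c (1, b1') = c (4, b4))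
    (e3 : c (2, q2) = c (5, q5)) : False := by
  apply hnr 3 (by norm_num)
    (fun n => (wordStar3 n,
      (match n with | 0 => b1 | 1 => b1' | 2 => q2 | 3 => b3 | 4 => b4 | _ => q5 : Fin k)))
  · intro i j hi hj hf
    have h1 : wordStar3 i = wordStar3 j := congrArg Prod.fst hf
    norm_num at hi hj
    interval_cases i <;> interval_cases j <;>
      first
      | rfl
      | exact absurd h1 (by decide)
      | exact absurd (congrArg Prod.snd hf) hbb
      | exact absurd (congrArg Prod.snd hf) (Ne.symm hbb)
  · intro i hi
    have hi' : i < 5 := by omega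
    clear hi
    interval_cases i <;>
      first
      | exact Or.inl (SimpleGraph.pathGraph_adj.mpr (Or.inl rfl))
      | exact Or.inl (SimpleGraph.pathGraph_adj.mpr (Or.inr rfl))
      | exact Or.inr ⟨rfl, hbb⟩
  · intro i hi
    have hi' : i < 3 := by omega
    clear hi
    interval_cases i
    · exact e1
    · exact e2
    · exact e3

/-- Layer word 0 1 2 | 3 4 4. -/
lemma star4 (a0 b1 q2 a3 b4 q4 : Fin k) (hbq : b4 ≠ q4)
    (e1 : c (0, a0) = c (3, a3)) (e2 : c (1, b1) = c (4, b4))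
    (e3 : c (2, q2) = c (4, q4)) : False := by
  apply hnr 3 (by norm_num)
    (fun n => (wordStar4 n,
      (match n with | 0 => a0 | 1 => b1 | 2 => q2 | 3 => a3 | 4 => b4 | _ => q4 : Fin k)))
  · intro i j hi hj hf
    have h1 : wordStar4 i = wordStar4 j := congrArg Prod.fst hf
    norm_num at hi hj
    interval_cases i <;> interval_cases j <;>
      first
      | rfl
      | exact absurd h1 (by decide)
      | exact absurd (congrArg Prod.snd hf) hbq
      | exact absurd (congrArg Prod.snd hf) (Ne.symm hbq)
  · intro i hi
    have hi' : i < 5 := by omega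
    clear hi
    interval_cases i <;>
      first
      | exact Or.inl (SimpleGraph.pathGraph_adj.mpr (Or.inl rfl))
      | exact Or.inl (SimpleGraph.pathGraph_adj.mpr (Or.inr rfl))
      | exact Or.inr ⟨rfl, hbq⟩
  · intro i hi
    have hi' : i < 3 := by omega
    clear hi
    interval_cases i
    · exact e1
    · exact e2
    · exact e3

/-- Layer word 0 0 1 2 | 3 4 5 5. -/
lemma star8 (a0 b0 p1 q2 a3 b4 p5 q5 : Fin k) (h00 : a0 ≠ b0) (h55 : p5 ≠ q5)
    (e1 : c (0, a0) = c (3, a3)) (e2 : c (0, b0) = c (4, b4))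
    (e3 : c (1, p1) = c (5, p5)) (e4 : c (2, q2) = c (5, q5)) : False := by
  apply hnr 4 (by norm_num)
    (fun n => (wordStar8 n,
      (match n with
       | 0 => a0 | 1 => b0 | 2 => p1 | 3 => q2 | 4 => a3 | 5 => b4 | 6 => p5 | _ => q5 : Fin k)))
  · intro i j hi hj hf
    have h1 : wordStar8 i = wordStar8 j := congrArg Prod.fst hf
    norm_num at hi hj
    interval_cases i <;> interval_cases j <;>
      first
      | rfl
      | exact absurd h1 (by decide)
      | exact absurd (congrArg Prod.snd hf) h00
      | exact absurd (congrArg Prod.snd hf) (Ne.symm h00)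
      | exact absurd (congrArg Prod.snd hf) h55
      | exact absurd (congrArg Prod.snd hf) (Ne.symm h55)
  · intro i hi
    have hi' : i < 7 := by omega
    clear hi
    interval_cases i <;>
      first
      | exact Or.inl (SimpleGraph.pathGraph_adj.mpr (Or.inl rfl))
      | exact Or.inl (SimpleGraph.pathGraph_adj.mpr (Or.inr rfl))
      | exact Or.inr ⟨rfl, h00⟩
      | exact Or.inr ⟨rfl, h55⟩
  · intro i hi
    have hi' : i < 4 := by omega
    clear hi
    interval_cases i
    · exact e1
    · exact e2
    · exact e3
    · exact e4

/-- Layer word 0 0 1 2 | 3 4 5 4. -/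
lemma star9 (a0 b0 p1 q2 a3 b4 p5 q4 : Fin k) (h00 : a0 ≠ b0) (h44 : b4 ≠ q4)
    (e1 : c (0, a0) = c (3, a3)) (e2 : c (0, b0) = c (4, b4))
    (e3 : c (1, p1) = c (5, p5)) (e4 : c (2, q2) = c (4, q4)) : False := by
  apply hnr 4 (by norm_num)
    (fun n => (wordStar9 n,
      (match n with
       | 0 => a0 | 1 => b0 | 2 => p1 | 3 => q2 | 4 => a3 | 5 => b4 | 6 => p5 | _ => q4 : Fin k)))
  · intro i j hi hj hf
    have h1 : wordStar9 i = wordStar9 j := congrArg Prod.fst hf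
    norm_num at hi hj
    interval_cases i <;> interval_cases j <;>
      first
      | rfl
      | exact absurd h1 (by decide)
      | exact absurd (congrArg Prod.snd hf) h00
      | exact absurd (congrArg Prod.snd hf) (Ne.symm h00)
      | exact absurd (congrArg Prod.snd hf) h44
      | exact absurd (congrArg Prod.snd hf) (Ne.symm h44)
  · intro i hi
    have hi' : i < 7 := by omega
    clear hi
    interval_cases i <;>
      first
      | exact Or.inl (SimpleGraph.pathGraph_adj.mpr (Or.inl rfl))
      | exact Or.inl (SimpleGraph.pathGraph_adj.mpr (Or.inr rfl))
      | exact Or.inr ⟨rfl, h00⟩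
      | exact Or.inr ⟨rfl, h44⟩
  · intro i hi
    have hi' : i < 4 := by omega
    clear hi
    interval_cases i
    · exact e1
    · exact e2
    · exact e3
    · exact e4

end Stars

lemma arith_clean (k m n dA dB eA eB eC fA fB fC : ℕ)
    (hmn : m + n = k)
    (hS : 3 * k + 1 ≤ dA + eA + fA + (dB + eB + fB) + (eC + fC) + m)
    (colA : dA + eA + fA ≤ k) (colB : dB + eB + fB ≤ k) (colC : eC + fC ≤ k)
    (rowD : dA + dB ≤ k) (rowE : eA + eB + eC ≤ k) (rowF : fA + fB + fC ≤ k)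
    (s1 : dB = 0 ∨ eC = 0) (s2 : dA = 0 ∨ eB = 0 ∨ fC = 0)
    (s3 : dB = 0 ∨ eB = 0 ∨ fC = 0) (s4 : dA = 0 ∨ eB = 0 ∨ eC = 0)
    (s8 : dA = 0 ∨ eA = 0 ∨ fB = 0 ∨ fC = 0)
    (s9 : dA = 0 ∨ eA = 0 ∨ fB = 0 ∨ eC = 0) :
    (n + 1 ≤ dB ∧ n + 1 ≤ eA ∧ n + 1 ≤ fC) ∨
    (n + 1 ≤ dA ∧ n + 1 ≤ eC ∧ n + 1 ≤ fB) := by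
  by_cases hec : eC = 0
  · have heb : eB = 0 := by
      rcases s2 with h | h | h <;> rcases s3 with h' | h' | h' <;> omega
    rcases s8 with h | h | h | h
    · left; omega
    · exfalso; omega
    · left; omega
    · exfalso; omega
  · have hdb : dB = 0 := by rcases s1 with h | h <;> omega
    have heb : eB = 0 := by rcases s4 with h | h | h <;> omega
    have hea : eA = 0 := by rcases s9 with h | h | h | h <;> omega
    right; omega

lemma sum_bound (k U I S : ℕ) (hk : 1 ≤ k) (hUI : U + I = 3 * k + 3 * k)
    (hUniv : U ≤ 3 * k + k / 2 - 1) (hsplit : I ≤ S) :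
    3 * k + 1 ≤ S + k / 2 := by omega

lemma arith_main (k dA dB dC eA eB eC fA fB fC U I : ℕ) (hk : 1 ≤ k)
    (hCD : dC = 0)
    (hUI : U + I = 3 * k + 3 * k) (hUniv : U ≤ 3 * k + k / 2 - 1)
    (hsplit : I ≤ dA + eA + fA + (dB + eB + fB) + (dC + eC + fC))
    (colA : dA + eA + fA ≤ k) (colB : dB + eB + fB ≤ k) (colC : eC + fC ≤ k)
    (rowD : dA + dB ≤ k) (rowE : eA + eB + eC ≤ k) (rowF : fA + fB + fC ≤ k)
    (s1 : dB = 0 ∨ eC = 0) (s2 : dA = 0 ∨ eB = 0 ∨ fC = 0)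
    (s3 : dB = 0 ∨ eB = 0 ∨ fC = 0) (s4 : dA = 0 ∨ eB = 0 ∨ eC = 0)
    (s8 : dA = 0 ∨ eA = 0 ∨ fB = 0 ∨ fC = 0)
    (s9 : dA = 0 ∨ eA = 0 ∨ fB = 0 ∨ eC = 0) :
    ((k + 1) / 2 + 1 ≤ dB ∧ (k + 1) / 2 + 1 ≤ eA ∧ (k + 1) / 2 + 1 ≤ fC) ∨
    ((k + 1) / 2 + 1 ≤ dA ∧ (k + 1) / 2 + 1 ≤ eC ∧ (k + 1) / 2 + 1 ≤ fB) := by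
  subst hCD
  have hS : 3 * k + 1 ≤ dA + eA + fA + (dB + eB + fB) + (eC + fC) + k / 2 :=
    sum_bound k U I _ hk hUI hUniv (by omega)
  exact arith_clean k (k / 2) ((k + 1) / 2) dA dB eA eB eC fA fB fC (by omega) hS
    colA colB colC rowD rowE rowF s1 s2 s3 s4 s8 s9

set_option maxHeartbeats 2000000 in
/-- Suppose `P₆[K_k]` is nonrepetitively colored with at most `3k + ⌊k/2⌋ - 1` colors
and `A,…,F` are the color sets of the six layers in path order. If `A, B, C` are
pairwise disjoint and `D, E, F` are pairwise disjoint, then `D, E, F` are either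
`B, A, C`-rich respectively, or `A, C, B`-rich respectively. -/
theorem stmt_15 (k : ℕ) (hk : 1 ≤ k)
    (c : Fin 6 × Fin k → Fin (3 * k + k / 2 - 1))
    (hnr : IsNonrepetitive (lexProd (SimpleGraph.pathGraph 6) (⊤ : SimpleGraph (Fin k))) c)
    (A B C D E F : Finset (Fin (3 * k + k / 2 - 1)))
    (hA : A = layerFinset c 0) (hB : B = layerFinset c 1) (hC : C = layerFinset c 2)
    (hD : D = layerFinset c 3) (hE : E = layerFinset c 4) (hF : F = layerFinset c 5)
    (hAB : Disjoint A B) (hAC : Disjoint A C) (hBC : Disjoint B C)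
    (hDE : Disjoint D E) (hDF : Disjoint D F) (hEF : Disjoint E F) :
    (IsRich k B D ∧ IsRich k A E ∧ IsRich k C F) ∨
    (IsRich k A D ∧ IsRich k C E ∧ IsRich k B F) := by
  classical
  have hproper : ∀ {u v : Fin 6 × Fin k},
      (lexProd (SimpleGraph.pathGraph 6) (⊤ : SimpleGraph (Fin k))).Adj u v → c u ≠ c v :=
    fun h => nr_proper hnr h
  -- every layer is rainbow
  have hlinj : ∀ i : Fin 6, Function.Injective fun j : Fin k => c (i, j) := by
    intro i j j' h
    by_contra hne
    refine hproper ?_ h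
    exact Or.inr ⟨rfl, hne⟩
  have hcard : ∀ i : Fin 6, (layerFinset c i).card = k := by
    intro i
    rw [layerFinset, Finset.card_image_of_injective _ (hlinj i), Finset.card_univ,
      Fintype.card_fin]
  have memL : ∀ (i : Fin 6) (x), x ∈ layerFinset c i → ∃ j, c (i, j) = x := by
    intro i x hx
    simpa [layerFinset, Finset.mem_image] using hx
  have hcA : A.card = k := by rw [hA]; exact hcard 0
  have hcB : B.card = k := by rw [hB]; exact hcard 1
  have hcC : C.card = k := by rw [hC]; exact hcard 2
  have hcD : D.card = k := by rw [hD]; exact hcard 3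
  have hcE : E.card = k := by rw [hE]; exact hcard 4
  have hcF : F.card = k := by rw [hF]; exact hcard 5
  -- the two neighbouring layers C and D share no colors
  have hCD : (C ∩ D).card = 0 := by
    rw [Finset.card_eq_zero]
    by_contra hne
    obtain ⟨x, hx⟩ := Finset.nonempty_iff_ne_empty.mpr hne
    rw [Finset.mem_inter] at hx
    obtain ⟨j, hj⟩ := memL 2 x (hC ▸ hx.1)
    obtain ⟨j', hj'⟩ := memL 3 x (hD ▸ hx.2)
    refine hproper ?_ (hj.trans hj'.symm)
    exact Or.inl (SimpleGraph.pathGraph_adj.mpr (Or.inl rfl))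
  -- disjointness of pieces
  have idisjR : ∀ {X Y Z W : Finset (Fin (3 * k + k / 2 - 1))}, Disjoint Y W →
      Disjoint (X ∩ Y) (Z ∩ W) := by
    intro X Y Z W h
    exact Finset.disjoint_left.mpr fun a ha hb =>
      Finset.disjoint_left.mp h (Finset.mem_inter.mp ha).2 (Finset.mem_inter.mp hb).2
  have idisjL : ∀ {X Y Z W : Finset (Fin (3 * k + k / 2 - 1))}, Disjoint X Z →
      Disjoint (X ∩ Y) (Z ∩ W) := by
    intro X Y Z W h
    exact Finset.disjoint_left.mpr fun a ha hb =>
      Finset.disjoint_left.mp h (Finset.mem_inter.mp ha).1 (Finset.mem_inter.mp hb).1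
  have pair : ∀ {X Y W : Finset (Fin (3 * k + k / 2 - 1))}, Disjoint X Y → X ⊆ W → Y ⊆ W →
      X.card + Y.card ≤ W.card := by
    intro X Y W hXY sX sY
    rw [← Finset.card_union_of_disjoint hXY]
    exact Finset.card_le_card (Finset.union_subset sX sY)
  have tri : ∀ {X Y Z W : Finset (Fin (3 * k + k / 2 - 1))}, Disjoint X Y → Disjoint X Z →
      Disjoint Y Z → X ⊆ W → Y ⊆ W → Z ⊆ W → X.card + Y.card + Z.card ≤ W.card := by
    intro X Y Z W hXY hXZ hYZ sX sY sZ
    rw [← Finset.card_union_of_disjoint hXY,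
      ← Finset.card_union_of_disjoint (Finset.disjoint_union_left.mpr ⟨hXZ, hYZ⟩)]
    exact Finset.card_le_card (Finset.union_subset (Finset.union_subset sX sY) sZ)
  -- row and column bounds
  have colA : (A ∩ D).card + (A ∩ E).card + (A ∩ F).card ≤ k := by
    have h := tri (W := A) (idisjR hDE) (idisjR hDF) (idisjR hEF)
      Finset.inter_subset_left Finset.inter_subset_left Finset.inter_subset_left
    omega
  have colB : (B ∩ D).card + (B ∩ E).card + (B ∩ F).card ≤ k := by
    have h := tri (W := B) (idisjR hDE) (idisjR hDF) (idisjR hEF)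
      Finset.inter_subset_left Finset.inter_subset_left Finset.inter_subset_left
    omega
  have colC : (C ∩ E).card + (C ∩ F).card ≤ k := by
    have h := pair (W := C) (idisjR hEF) Finset.inter_subset_left Finset.inter_subset_left
    omega
  have rowD : (A ∩ D).card + (B ∩ D).card ≤ k := by
    have h := pair (W := D) (idisjL hAB) Finset.inter_subset_right Finset.inter_subset_right
    omega
  have rowE : (A ∩ E).card + (B ∩ E).card + (C ∩ E).card ≤ k := by
    have h := tri (W := E) (idisjL hAB) (idisjL hAC) (idisjL hBC)
      Finset.inter_subset_right Finset.inter_subset_right Finset.inter_subset_right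
    omega
  have rowF : (A ∩ F).card + (B ∩ F).card + (C ∩ F).card ≤ k := by
    have h := tri (W := F) (idisjL hAB) (idisjL hAC) (idisjL hBC)
      Finset.inter_subset_right Finset.inter_subset_right Finset.inter_subset_right
    omega
  -- counting colors
  have hABC : (A ∪ B ∪ C).card = 3 * k := by
    rw [Finset.card_union_of_disjoint (Finset.disjoint_union_left.mpr ⟨hAC, hBC⟩),
      Finset.card_union_of_disjoint hAB, hcA, hcB, hcC]
    ring
  have hDEF : (D ∪ E ∪ F).card = 3 * k := by
    rw [Finset.card_union_of_disjoint (Finset.disjoint_union_left.mpr ⟨hDF, hEF⟩),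
      Finset.card_union_of_disjoint hDE, hcD, hcE, hcF]
    ring
  have hUI : ((A ∪ B ∪ C) ∪ (D ∪ E ∪ F)).card + ((A ∪ B ∪ C) ∩ (D ∪ E ∪ F)).card
      = 3 * k + 3 * k := by
    rw [Finset.card_union_add_card_inter, hABC, hDEF]
  have hUniv : ((A ∪ B ∪ C) ∪ (D ∪ E ∪ F)).card ≤ 3 * k + k / 2 - 1 := by
    simpa using Finset.card_le_univ ((A ∪ B ∪ C) ∪ (D ∪ E ∪ F))
  have c3 : ∀ X Y Z : Finset (Fin (3 * k + k / 2 - 1)),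
      (X ∪ Y ∪ Z).card ≤ X.card + Y.card + Z.card := fun X Y Z =>
    le_trans (Finset.card_union_le _ _) (add_le_add (Finset.card_union_le _ _) le_rfl)
  have hsplit : ((A ∪ B ∪ C) ∩ (D ∪ E ∪ F)).card ≤
      ((A ∩ D).card + (A ∩ E).card + (A ∩ F).card)
      + ((B ∩ D).card + (B ∩ E).card + (B ∩ F).card)
      + ((C ∩ D).card + (C ∩ E).card + (C ∩ F).card) := by
    have e1 : (A ∪ B ∪ C) ∩ (D ∪ E ∪ F) =
        (A ∩ D ∪ A ∩ E ∪ A ∩ F) ∪ (B ∩ D ∪ B ∩ E ∪ B ∩ F) ∪ (C ∩ D ∪ C ∩ E ∪ C ∩ F) := by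
      rw [Finset.union_inter_distrib_right, Finset.union_inter_distrib_right,
        Finset.inter_union_distrib_left, Finset.inter_union_distrib_left,
        Finset.inter_union_distrib_left, Finset.inter_union_distrib_left,
        Finset.inter_union_distrib_left, Finset.inter_union_distrib_left]
    rw [e1]
    refine le_trans (c3 _ _ _) ?_
    exact add_le_add (add_le_add (c3 _ _ _) (c3 _ _ _)) (c3 _ _ _)
  -- helper to get witnesses from a nonzero intersection
  have wit : ∀ {X Y : Finset (Fin (3 * k + k / 2 - 1))}, (X ∩ Y).card ≠ 0 →
      ∃ x, x ∈ X ∧ x ∈ Y := by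
    intro X Y h
    obtain ⟨x, hx⟩ := Finset.card_ne_zero.mp h
    exact ⟨x, Finset.mem_inter.mp hx⟩
  -- the forbidden patterns
  have s1 : (B ∩ D).card = 0 ∨ (C ∩ E).card = 0 := by
    by_contra hcon
    push_neg at hcon
    obtain ⟨x, hx1, hx2⟩ := wit hcon.1
    obtain ⟨y, hy1, hy2⟩ := wit hcon.2
    obtain ⟨b1, hb1⟩ := memL 1 x (hB ▸ hx1)
    obtain ⟨b3, hb3⟩ := memL 3 x (hD ▸ hx2)
    obtain ⟨q2, hq2⟩ := memL 2 y (hC ▸ hy1)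
    obtain ⟨q4, hq4⟩ := memL 4 y (hE ▸ hy2)
    exact star1 hnr b1 q2 b3 q4 (hb1.trans hb3.symm) (hq2.trans hq4.symm)
  have s2 : (A ∩ D).card = 0 ∨ (B ∩ E).card = 0 ∨ (C ∩ F).card = 0 := by
    by_contra hcon
    push_neg at hcon
    obtain ⟨x, hx1, hx2⟩ := wit hcon.1
    obtain ⟨y, hy1, hy2⟩ := wit hcon.2.1
    obtain ⟨z, hz1, hz2⟩ := wit hcon.2.2
    obtain ⟨a0, ha0⟩ := memL 0 x (hA ▸ hx1)
    obtain ⟨a3, ha3⟩ := memL 3 x (hD ▸ hx2)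
    obtain ⟨b1, hb1⟩ := memL 1 y (hB ▸ hy1)
    obtain ⟨b4, hb4⟩ := memL 4 y (hE ▸ hy2)
    obtain ⟨q2, hq2⟩ := memL 2 z (hC ▸ hz1)
    obtain ⟨q5, hq5⟩ := memL 5 z (hF ▸ hz2)
    exact star2 hnr a0 b1 q2 a3 b4 q5 (ha0.trans ha3.symm) (hb1.trans hb4.symm)
      (hq2.trans hq5.symm)
  have s3 : (B ∩ D).card = 0 ∨ (B ∩ E).card = 0 ∨ (C ∩ F).card = 0 := by
    by_contra hcon
    push_neg at hcon
    obtain ⟨x, hx1, hx2⟩ := wit hcon.1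
    obtain ⟨y, hy1, hy2⟩ := wit hcon.2.1
    obtain ⟨z, hz1, hz2⟩ := wit hcon.2.2
    obtain ⟨b1, hb1⟩ := memL 1 x (hB ▸ hx1)
    obtain ⟨b3, hb3⟩ := memL 3 x (hD ▸ hx2)
    obtain ⟨b1', hb1'⟩ := memL 1 y (hB ▸ hy1)
    obtain ⟨b4, hb4⟩ := memL 4 y (hE ▸ hy2)
    obtain ⟨q2, hq2⟩ := memL 2 z (hC ▸ hz1)
    obtain ⟨q5, hq5⟩ := memL 5 z (hF ▸ hz2)
    have hxy : x ≠ y := fun h => Finset.disjoint_left.mp hDE hx2 (h ▸ hy2)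
    have hbb : b1 ≠ b1' := fun h => hxy (by rw [← hb1, ← hb1', h])
    exact star3 hnr b1 b1' q2 b3 b4 q5 hbb (hb1.trans hb3.symm) (hb1'.trans hb4.symm)
      (hq2.trans hq5.symm)
  have s4 : (A ∩ D).card = 0 ∨ (B ∩ E).card = 0 ∨ (C ∩ E).card = 0 := by
    by_contra hcon
    push_neg at hcon
    obtain ⟨x, hx1, hx2⟩ := wit hcon.1
    obtain ⟨y, hy1, hy2⟩ := wit hcon.2.1
    obtain ⟨z, hz1, hz2⟩ := wit hcon.2.2
    obtain ⟨a0, ha0⟩ := memL 0 x (hA ▸ hx1)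
    obtain ⟨a3, ha3⟩ := memL 3 x (hD ▸ hx2)
    obtain ⟨b1, hb1⟩ := memL 1 y (hB ▸ hy1)
    obtain ⟨b4, hb4⟩ := memL 4 y (hE ▸ hy2)
    obtain ⟨q2, hq2⟩ := memL 2 z (hC ▸ hz1)
    obtain ⟨q4, hq4⟩ := memL 4 z (hE ▸ hz2)
    have hyz : y ≠ z := fun h => Finset.disjoint_left.mp hBC hy1 (h ▸ hz1)
    have hbq : b4 ≠ q4 := fun h => hyz (by rw [← hb4, ← hq4, h])
    exact star4 hnr a0 b1 q2 a3 b4 q4 hbq (ha0.trans ha3.symm) (hb1.trans hb4.symm)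
      (hq2.trans hq4.symm)
  have s8 : (A ∩ D).card = 0 ∨ (A ∩ E).card = 0 ∨ (B ∩ F).card = 0 ∨ (C ∩ F).card = 0 := by
    by_contra hcon
    push_neg at hcon
    obtain ⟨x, hx1, hx2⟩ := wit hcon.1
    obtain ⟨y, hy1, hy2⟩ := wit hcon.2.1
    obtain ⟨z, hz1, hz2⟩ := wit hcon.2.2.1
    obtain ⟨w, hw1, hw2⟩ := wit hcon.2.2.2
    obtain ⟨a0, ha0⟩ := memL 0 x (hA ▸ hx1)
    obtain ⟨a3, ha3⟩ := memL 3 x (hD ▸ hx2)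
    obtain ⟨b0, hb0⟩ := memL 0 y (hA ▸ hy1)
    obtain ⟨b4, hb4⟩ := memL 4 y (hE ▸ hy2)
    obtain ⟨p1, hp1⟩ := memL 1 z (hB ▸ hz1)
    obtain ⟨p5, hp5⟩ := memL 5 z (hF ▸ hz2)
    obtain ⟨q2, hq2⟩ := memL 2 w (hC ▸ hw1)
    obtain ⟨q5, hq5⟩ := memL 5 w (hF ▸ hw2)
    have hxy : x ≠ y := fun h => Finset.disjoint_left.mp hDE hx2 (h ▸ hy2)
    have h00 : a0 ≠ b0 := fun h => hxy (by rw [← ha0, ← hb0, h])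
    have hzw : z ≠ w := fun h => Finset.disjoint_left.mp hBC hz1 (h ▸ hw1)
    have h55 : p5 ≠ q5 := fun h => hzw (by rw [← hp5, ← hq5, h])
    exact star8 hnr a0 b0 p1 q2 a3 b4 p5 q5 h00 h55 (ha0.trans ha3.symm)
      (hb0.trans hb4.symm) (hp1.trans hp5.symm) (hq2.trans hq5.symm)
  have s9 : (A ∩ D).card = 0 ∨ (A ∩ E).card = 0 ∨ (B ∩ F).card = 0 ∨ (C ∩ E).card = 0 := by
    by_contra hcon
    push_neg at hcon
    obtain ⟨x, hx1, hx2⟩ := wit hcon.1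
    obtain ⟨y, hy1, hy2⟩ := wit hcon.2.1
    obtain ⟨z, hz1, hz2⟩ := wit hcon.2.2.1
    obtain ⟨w, hw1, hw2⟩ := wit hcon.2.2.2
    obtain ⟨a0, ha0⟩ := memL 0 x (hA ▸ hx1)
    obtain ⟨a3, ha3⟩ := memL 3 x (hD ▸ hx2)
    obtain ⟨b0, hb0⟩ := memL 0 y (hA ▸ hy1)
    obtain ⟨b4, hb4⟩ := memL 4 y (hE ▸ hy2)
    obtain ⟨p1, hp1⟩ := memL 1 z (hB ▸ hz1)
    obtain ⟨p5, hp5⟩ := memL 5 z (hF ▸ hz2)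
    obtain ⟨q2, hq2⟩ := memL 2 w (hC ▸ hw1)
    obtain ⟨q4, hq4⟩ := memL 4 w (hE ▸ hw2)
    have hxy : x ≠ y := fun h => Finset.disjoint_left.mp hDE hx2 (h ▸ hy2)
    have h00 : a0 ≠ b0 := fun h => hxy (by rw [← ha0, ← hb0, h])
    have hyw : y ≠ w := fun h => Finset.disjoint_left.mp hAC hy1 (h ▸ hw1)
    have h44 : b4 ≠ q4 := fun h => hyw (by rw [← hb4, ← hq4, h])
    exact star9 hnr a0 b0 p1 q2 a3 b4 p5 q4 h00 h44 (ha0.trans ha3.symm)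
      (hb0.trans hb4.symm) (hp1.trans hp5.symm) (hq2.trans hq4.symm)
  -- final arithmetic case analysis
  simp only [IsRich]
  exact arith_main k ((A ∩ D).card) ((B ∩ D).card) ((C ∩ D).card) ((A ∩ E).card)
    ((B ∩ E).card) ((C ∩ E).card) ((A ∩ F).card) ((B ∩ F).card) ((C ∩ F).card)
    _ _ hk hCD hUI hUniv hsplit colA colB colC rowD rowE rowF s1 s2 s3 s4 s8 s9
end

section
/- The fractional Thue chromatic number of the cycle on 7 vertices equals 7/2; that is, there exists a 2-tuple nonrepetitive 7-coloring of C_7, and every p-tuple nonrepetitive q-coloring of C_7 satisfies q/p ≥ 7/2 (equivalently 2q ≥ 7p). -/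
/-- For positive integers `p ≤ q`, a `p`-tuple nonrepetitive `q`-coloring of a graph
`G` is a map assigning to each vertex a `p`-element subset of the `q` colors such that
for every path `v₁ v₂ … v_{2l}` (pairwise distinct vertices, consecutive ones adjacent)
and every choice of colors `cᵢ ∈ c(vᵢ)`, the sequence `c₁, …, c_{2l}` is not a
repetition. Here the tuple-size condition is stated separately. -/
def IsTupleNonrepetitive {V : Type*} (G : SimpleGraph V) (q : ℕ)
    (c : V → Finset (Fin q)) : Prop :=
  ∀ l : ℕ, 0 < l → ∀ f : ℕ → V,
    (∀ i j, i < 2 * l → j < 2 * l → f i = f j → i = j) →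
    (∀ i, i + 1 < 2 * l → G.Adj (f i) (f (i + 1))) →
    ∀ g : ℕ → Fin q, (∀ i, i < 2 * l → g i ∈ c (f i)) →
      ¬ (∀ i, i < l → g i = g (i + l))

set_option maxRecDepth 4000

open Fin.CommRing

-- basic arithmetic helper
lemma natCast7_inj {i j : ℕ} (hi : i < 7) (hj : j < 7) (h : (i : Fin 7) = j) : i = j := by
  have := congrArg Fin.val h
  simpa [Fin.val_natCast, Nat.mod_eq_of_lt hi, Nat.mod_eq_of_lt hj] using this

lemma adj_of_succ (x : Fin 7) (i : ℕ) :
    (SimpleGraph.cycleGraph 7).Adj (x + (i : Fin 7)) (x + ((i+1 : ℕ) : Fin 7)) := by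
  rw [SimpleGraph.cycleGraph_adj']
  right
  have : (x + ((i+1 : ℕ) : Fin 7)) - (x + (i : Fin 7)) = 1 := by push_cast; ring
  rw [this]
  rfl

section ValidLemmas

variable {q : ℕ} (c : Fin 7 → Finset (Fin q))
  (h : IsTupleNonrepetitive (SimpleGraph.cycleGraph 7) q c)
include h

lemma L1 (x : Fin 7) : (c x ∩ c (x+1)).Nonempty → False := by
  rintro ⟨b, hb⟩
  rw [Finset.mem_inter] at hb
  refine h 1 one_pos (fun i => x + (i : Fin 7)) ?_ ?_ (fun _ => b) ?_ (fun i _ => rfl)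
  · intro i j hi hj hij
    exact natCast7_inj (by omega) (by omega) (add_left_cancel hij)
  · intro i _
    exact adj_of_succ x i
  · intro i hi
    interval_cases i
    · simpa using hb.1
    · simpa using hb.2

lemma L2 (x : Fin 7) (h1 : (c x ∩ c (x+2)).Nonempty)
    (h2 : (c (x+1) ∩ c (x+3)).Nonempty) : False := by
  obtain ⟨b0, hb0⟩ := h1
  obtain ⟨b1, hb1⟩ := h2
  rw [Finset.mem_inter] at hb0 hb1
  refine h 2 two_pos (fun i => x + (i : Fin 7)) ?_ ?_
    (fun i => if i % 2 = 0 then b0 else b1) ?_ ?_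
  · intro i j hi hj hij
    exact natCast7_inj (by omega) (by omega) (add_left_cancel hij)
  · intro i _
    exact adj_of_succ x i
  · intro i hi
    interval_cases i
    · simpa using hb0.1
    · simpa using hb1.1
    · simpa using hb0.2
    · simpa using hb1.2
  · intro i hi
    simp [Nat.add_mod_right]

lemma L3 (x : Fin 7) (h1 : (c x ∩ c (x+3)).Nonempty)
    (h2 : (c (x+1) ∩ c (x+4)).Nonempty)
    (h3 : (c (x+2) ∩ c (x+5)).Nonempty) : False := by
  obtain ⟨b0, hb0⟩ := h1
  obtain ⟨b1, hb1⟩ := h2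
  obtain ⟨b2, hb2⟩ := h3
  rw [Finset.mem_inter] at hb0 hb1 hb2
  refine h 3 three_pos (fun i => x + (i : Fin 7)) ?_ ?_
    (fun i => if i % 3 = 0 then b0 else if i % 3 = 1 then b1 else b2) ?_ ?_
  · intro i j hi hj hij
    exact natCast7_inj (by omega) (by omega) (add_left_cancel hij)
  · intro i _
    exact adj_of_succ x i
  · intro i hi
    interval_cases i
    · simpa using hb0.1
    · simpa using hb1.1
    · simpa using hb2.1
    · simpa using hb0.2
    · simpa using hb1.2
    · simpa using hb2.2
  · intro i hi
    simp [Nat.add_mod_right]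

end ValidLemmas


lemma countw {q p : ℕ} (c : Fin 7 → Finset (Fin q)) (hcard : ∀ v, (c v).card = p)
    (w : Fin 7 → ℕ) (hw : ∑ v, w v = 21)
    (hcl : ∀ a : Fin q, ∑ v ∈ Finset.univ.filter (fun v => a ∈ c v), w v ≤ 6) :
    7 * p ≤ 2 * q := by
  have key : 21 * p ≤ 6 * q := by
    calc 21 * p = ∑ v : Fin 7, w v * p := by rw [← Finset.sum_mul, hw]
    _ = ∑ v : Fin 7, ∑ a : Fin q, if a ∈ c v then w v else 0 := by
        refine Finset.sum_congr rfl fun v _ => ?_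
        rw [Finset.sum_ite_mem, Finset.univ_inter, Finset.sum_const, ← hcard v]
        rw [smul_eq_mul, mul_comm]
    _ = ∑ a : Fin q, ∑ v : Fin 7, if a ∈ c v then w v else 0 := Finset.sum_comm
    _ = ∑ a : Fin q, ∑ v ∈ Finset.univ.filter (fun v => a ∈ c v), w v := by
        refine Finset.sum_congr rfl fun a _ => ?_
        rw [Finset.sum_filter]
    _ ≤ ∑ _a : Fin q, 6 := Finset.sum_le_sum fun a _ => hcl a
    _ = 6 * q := by simp [mul_comm]
  omega

def wA : Fin 7 → ℕ := ![0,3,3,6,3,3,3]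
def wB : Fin 7 → ℕ := ![3,6,3,3,0,3,3]

lemma helpA : ∀ S : Finset (Fin 7), (∀ x : Fin 7, ¬(x ∈ S ∧ x + 1 ∈ S)) →
    ¬((1:Fin 7) ∈ S ∧ (3:Fin 7) ∈ S) → ¬((3:Fin 7) ∈ S ∧ (5:Fin 7) ∈ S) →
    ¬((6:Fin 7) ∈ S ∧ (1:Fin 7) ∈ S) → ¬((3:Fin 7) ∈ S ∧ (6:Fin 7) ∈ S) →
    ¬((2:Fin 7) ∈ S ∧ (4:Fin 7) ∈ S ∧ (6:Fin 7) ∈ S) →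
    ∑ v ∈ S, wA v ≤ 6 := by decide

lemma helpB : ∀ S : Finset (Fin 7), (∀ x : Fin 7, ¬(x ∈ S ∧ x + 1 ∈ S)) →
    ¬((1:Fin 7) ∈ S ∧ (3:Fin 7) ∈ S) → ¬((3:Fin 7) ∈ S ∧ (5:Fin 7) ∈ S) →
    ¬((6:Fin 7) ∈ S ∧ (1:Fin 7) ∈ S) → ¬((5:Fin 7) ∈ S ∧ (1:Fin 7) ∈ S) →
    ¬((5:Fin 7) ∈ S ∧ (0:Fin 7) ∈ S ∧ (2:Fin 7) ∈ S) →
    ∑ v ∈ S, wB v ≤ 6 := by decide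

lemma helpC : ∀ S : Finset (Fin 7), (∀ x : Fin 7, ¬(x ∈ S ∧ x + 1 ∈ S)) →
    (∀ x : Fin 7, ¬(x ∈ S ∧ x + 2 ∈ S ∧ x + 4 ∈ S)) →
    ∑ _v ∈ S, 3 ≤ 6 := by decide

lemma rot {q : ℕ} (c : Fin 7 → Finset (Fin q))
    (h : IsTupleNonrepetitive (SimpleGraph.cycleGraph 7) q c) (x : Fin 7) :
    IsTupleNonrepetitive (SimpleGraph.cycleGraph 7) q (fun v => c (v + x)) := by
  intro l hl f hinj hadj g hg
  refine h l hl (fun i => f i + x) ?_ ?_ g hg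
  · intro i j hi hj hij
    exact hinj i j hi hj (by simpa using hij)
  · intro i hi
    have := hadj i hi
    rw [SimpleGraph.cycleGraph_adj'] at this ⊢
    simpa using this

lemma core {q p : ℕ} (c : Fin 7 → Finset (Fin q)) (hcard : ∀ v, (c v).card = p)
    (h : IsTupleNonrepetitive (SimpleGraph.cycleGraph 7) q c)
    (a : Fin q) (ha0 : a ∈ c 0) (ha2 : a ∈ c 2) (ha4 : a ∈ c 4) :
    7 * p ≤ 2 * q := by
  have hs0 : (c 0 ∩ c (0+2)).Nonempty := ⟨a, Finset.mem_inter.2 ⟨ha0, ha2⟩⟩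
  have hs2 : (c 2 ∩ c (2+2)).Nonempty := ⟨a, Finset.mem_inter.2 ⟨ha2, ha4⟩⟩
  have ht4 : (c 4 ∩ c (4+3)).Nonempty := ⟨a, Finset.mem_inter.2 ⟨ha4, ha0⟩⟩
  -- F1 : not (b ∈ c 1 ∧ b ∈ c 3)
  have F1 : ∀ b : Fin q, ¬(b ∈ c 1 ∧ b ∈ c 3) := by
    rintro b ⟨h1, h3⟩
    exact L2 c h 0 hs0 ⟨b, Finset.mem_inter.2 ⟨h1, h3⟩⟩
  have F2 : ∀ b : Fin q, ¬(b ∈ c 3 ∧ b ∈ c 5) := by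
    rintro b ⟨h3, h5⟩
    exact L2 c h 2 hs2 ⟨b, Finset.mem_inter.2 ⟨h3, h5⟩⟩
  have F3 : ∀ b : Fin q, ¬(b ∈ c 6 ∧ b ∈ c 1) := by
    rintro b ⟨h6, h1⟩
    exact L2 c h 6 ⟨b, Finset.mem_inter.2 ⟨h6, h1⟩⟩ hs0
  have Fadj : ∀ b : Fin q, ∀ x : Fin 7, ¬(b ∈ c x ∧ b ∈ c (x+1)) := by
    rintro b x ⟨hx, hx1⟩
    exact L1 c h x ⟨b, Finset.mem_inter.2 ⟨hx, hx1⟩⟩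
  by_cases hB : (c 3 ∩ c 6).Nonempty ∨ (c 2 ∩ c 4 ∩ c 6).Nonempty
  · -- weights wB
    have F4 : ∀ b : Fin q, ¬(b ∈ c 5 ∧ b ∈ c 1) := by
      rintro b ⟨h5, h1⟩
      rcases hB with h36 | htr
      · exact L3 c h 3 h36 ht4 ⟨b, Finset.mem_inter.2 ⟨h5, h1⟩⟩
      · obtain ⟨b', hb'⟩ := htr
        rw [Finset.mem_inter, Finset.mem_inter] at hb'
        exact L3 c h 4 ht4 ⟨b, Finset.mem_inter.2 ⟨h5, h1⟩⟩
          ⟨b', Finset.mem_inter.2 ⟨hb'.2, hb'.1.1⟩⟩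
    have F5 : ∀ b : Fin q, ¬(b ∈ c 5 ∧ b ∈ c 0 ∧ b ∈ c 2) := by
      rintro b ⟨h5, h0, h2⟩
      rcases hB with h36 | htr
      · exact L3 c h 2 ⟨b, Finset.mem_inter.2 ⟨h2, h5⟩⟩ h36 ht4
      · obtain ⟨b', hb'⟩ := htr
        rw [Finset.mem_inter, Finset.mem_inter] at hb'
        exact L2 c h 4 ⟨b', Finset.mem_inter.2 ⟨hb'.1.2, hb'.2⟩⟩
          ⟨b, Finset.mem_inter.2 ⟨h5, h0⟩⟩
    refine countw c hcard wB (by decide) fun b => ?_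
    refine helpB _ ?_ ?_ ?_ ?_ ?_ ?_ <;>
      simp only [Finset.mem_filter, Finset.mem_univ, true_and]
    · intro x hx; exact Fadj b x hx
    · intro hx; exact F1 b hx
    · intro hx; exact F2 b hx
    · intro hx; exact F3 b hx
    · intro hx; exact F4 b hx
    · intro hx; exact F5 b hx
  · push_neg at hB
    have h36 := hB.1
    have htr := hB.2
    refine countw c hcard wA (by decide) fun b => ?_
    refine helpA _ ?_ ?_ ?_ ?_ ?_ ?_ <;>
      simp only [Finset.mem_filter, Finset.mem_univ, true_and]
    · intro x hx; exact Fadj b x hx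
    · intro hx; exact F1 b hx
    · intro hx; exact F2 b hx
    · intro hx; exact F3 b hx
    · rintro ⟨h3, h6⟩
      exact (Finset.not_nonempty_iff_eq_empty.2 h36) ⟨b, Finset.mem_inter.2 ⟨h3, h6⟩⟩
    · rintro ⟨h2, h4, h6⟩
      exact (Finset.not_nonempty_iff_eq_empty.2 htr) ⟨b, Finset.mem_inter.2 ⟨Finset.mem_inter.2 ⟨h2, h4⟩, h6⟩⟩

def cc : Fin 7 → Finset (Fin 7) :=
  ![{0,1},{2,3},{0,4},{1,5},{4,6},{2,3},{5,6}]

lemma ccCard : ∀ v, (cc v).card = 2 := by decide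

lemma U1 : ∀ x d : Fin 7, (d = 1 ∨ d = -1) → cc x ∩ cc (x + d) = ∅ := by decide

lemma U2 : ∀ x d : Fin 7, (d = 1 ∨ d = -1) →
    cc x ∩ cc (x + 2*d) = ∅ ∨ cc (x + d) ∩ cc (x + 3*d) = ∅ := by decide

lemma U3 : ∀ x d : Fin 7, (d = 1 ∨ d = -1) →
    cc x ∩ cc (x + 3*d) = ∅ ∨ cc (x + d) ∩ cc (x + 4*d) = ∅ ∨
    cc (x + 2*d) ∩ cc (x + 5*d) = ∅ := by decide

lemma path_arc (l : ℕ) (hl : 0 < l) (f : ℕ → Fin 7)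
    (hinj : ∀ i j, i < 2*l → j < 2*l → f i = f j → i = j)
    (hadj : ∀ i, i + 1 < 2*l → (SimpleGraph.cycleGraph 7).Adj (f i) (f (i+1))) :
    l ≤ 3 ∧ ∃ d : Fin 7, (d = 1 ∨ d = -1) ∧ ∀ i, i < 2*l → f i = f 0 + (i : Fin 7) * d := by
  have hl3 : l ≤ 3 := by
    by_contra hc
    have h8 : (8:ℕ) ≤ 2*l := by omega
    have hF : Function.Injective (fun i : Fin 8 => f i) := by
      intro i j hij
      exact Fin.ext (hinj i j (by omega) (by omega) hij)
    have := Fintype.card_le_of_injective _ hF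
    simp at this
  refine ⟨hl3, f 1 - f 0, ?_, ?_⟩
  · have := hadj 0 (by omega)
    rw [SimpleGraph.cycleGraph_adj'] at this
    rcases this with h' | h'
    · right
      have : f 0 - f 1 = 1 := Fin.ext h'
      have : f 1 - f 0 = -(f 0 - f 1) := by ring
      rw [this]; simp_all
    · left; exact Fin.ext h'
  · set d := f 1 - f 0 with hd
    have hdpm : d = 1 ∨ d = -1 := by
      have := hadj 0 (by omega)
      rw [SimpleGraph.cycleGraph_adj'] at this
      rcases this with h' | h'
      · right
        have h1 : f 0 - f 1 = 1 := Fin.ext h'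
        rw [hd, show f 1 - f 0 = -(f 0 - f 1) by ring, h1]
      · left; exact Fin.ext h'
    have key : ∀ i, i + 1 < 2*l → f (i+1) = f i + d := by
      intro i
      induction i with
      | zero => intro _; rw [hd]; ring
      | succ n ih =>
        intro hn
        have e1 : f (n+1) = f n + d := ih (by omega)
        have h2 := hadj (n+1) hn
        rw [SimpleGraph.cycleGraph_adj'] at h2
        have he : f (n+1+1) = f (n+1) + 1 ∨ f (n+1+1) = f (n+1) + (-1) := by
          rcases h2 with h' | h'
          · right
            have : f (n+1) - f (n+1+1) = 1 := Fin.ext h'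
            linear_combination -this
          · left
            have : f (n+1+1) - f (n+1) = 1 := Fin.ext h'
            linear_combination this
        have hcontra : f (n+1+1) ≠ f n := by
          intro hcon
          have := hinj (n+1+1) n (by omega) (by omega) hcon
          omega
        rcases hdpm with hd1 | hd1 <;> rcases he with he1 | he1 <;>
          first
          | (rw [hd1]; exact he1)
          | (exfalso; apply hcontra; rw [he1, e1, hd1]; ring)
    intro i
    induction i with
    | zero => intro _; simp
    | succ n ih =>
      intro hn
      have h1 := ih (by omega)
      have h2 := key n (by omega)
      rw [h2, h1]
      push_cast
      ring

/-- The fractional Thue chromatic number of `C₇` equals `7/2`: there is a `2`-tuple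
nonrepetitive `7`-coloring of `C₇`, and every `p`-tuple nonrepetitive `q`-coloring of
`C₇` satisfies `2q ≥ 7p`. -/
theorem stmt_19 :
    (∃ c : Fin 7 → Finset (Fin 7), (∀ v, (c v).card = 2) ∧
      IsTupleNonrepetitive (SimpleGraph.cycleGraph 7) 7 c) ∧
    (∀ p q : ℕ, 0 < p → p < q → ∀ c : Fin 7 → Finset (Fin q),
      (∀ v, (c v).card = p) →
      IsTupleNonrepetitive (SimpleGraph.cycleGraph 7) q c → 7 * p ≤ 2 * q) := by
  constructor
  · refine ⟨cc, ccCard, ?_⟩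
    intro l hl f hinj hadj g hg hrep
    obtain ⟨hl3, d, hd, harc⟩ := path_arc l hl f hinj hadj
    interval_cases l
    · have m0 := hg 0 (by omega)
      have m1 := hg 1 (by omega)
      have e0 := hrep 0 (by omega)
      have f1 := harc 1 (by omega)
      norm_num at f1
      rw [f1, ← e0] at m1
      exact Finset.notMem_empty _ ((U1 (f 0) d hd) ▸ Finset.mem_inter.2 ⟨m0, m1⟩)
    · have m0 := hg 0 (by omega)
      have m1 := hg 1 (by omega)
      have m2 := hg 2 (by omega)
      have m3 := hg 3 (by omega)
      have e0 := hrep 0 (by omega)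
      have e1 := hrep 1 (by omega)
      have f1 := harc 1 (by omega); norm_num at f1
      have f2 := harc 2 (by omega); norm_num at f2
      have f3 := harc 3 (by omega); norm_num at f3
      rw [f2, ← e0] at m2
      rw [f1] at m1
      rw [f3, ← e1] at m3
      rcases U2 (f 0) d hd with h' | h'
      · exact Finset.notMem_empty _ (h' ▸ Finset.mem_inter.2 ⟨m0, m2⟩)
      · exact Finset.notMem_empty _ (h' ▸ Finset.mem_inter.2 ⟨m1, m3⟩)
    · have m0 := hg 0 (by omega)
      have m1 := hg 1 (by omega)
      have m2 := hg 2 (by omega)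
      have m3 := hg 3 (by omega)
      have m4 := hg 4 (by omega)
      have m5 := hg 5 (by omega)
      have e0 := hrep 0 (by omega)
      have e1 := hrep 1 (by omega)
      have e2 := hrep 2 (by omega)
      have f1 := harc 1 (by omega); norm_num at f1
      have f2 := harc 2 (by omega); norm_num at f2
      have f3 := harc 3 (by omega); norm_num at f3
      have f4 := harc 4 (by omega); norm_num at f4
      have f5 := harc 5 (by omega); norm_num at f5
      rw [f3, ← e0] at m3
      rw [f1] at m1
      rw [f4, ← e1] at m4
      rw [f2] at m2
      rw [f5, ← e2] at m5
      rcases U3 (f 0) d hd with h' | h' | h'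
      · exact Finset.notMem_empty _ (h' ▸ Finset.mem_inter.2 ⟨m0, m3⟩)
      · exact Finset.notMem_empty _ (h' ▸ Finset.mem_inter.2 ⟨m1, m4⟩)
      · exact Finset.notMem_empty _ (h' ▸ Finset.mem_inter.2 ⟨m2, m5⟩)
  · intro p q hp hpq c hcard hval
    by_cases htri : ∃ x : Fin 7, ∃ a : Fin q, a ∈ c x ∧ a ∈ c (x+2) ∧ a ∈ c (x+4)
    · obtain ⟨x, a, h0, h2, h4⟩ := htri
      have hval' := rot c hval x
      refine core (fun v => c (v + x)) (fun v => hcard (v + x)) hval' a ?_ ?_ ?_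
      · show a ∈ c (0 + x); rw [zero_add]; exact h0
      · show a ∈ c (2 + x); rw [add_comm]; exact h2
      · show a ∈ c (4 + x); rw [add_comm]; exact h4
    · push_neg at htri
      refine countw c hcard (fun _ => 3) (by decide) fun b => ?_
      refine helpC _ ?_ ?_ <;> simp only [Finset.mem_filter, Finset.mem_univ, true_and]
      · rintro x ⟨hx, hx1⟩; exact L1 c hval x ⟨b, Finset.mem_inter.2 ⟨hx, hx1⟩⟩
      · rintro x ⟨hx, hx2, hx4⟩; exact htri x b hx hx2 hx4
end
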